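/- Let C ⊆ F^D be a linear code, and let I, S ⊆ D with S unconstrained with respect to C. Then I ∪ S is constrained with respect to C if and only if I \ S is constrained with respect to the zero subcode Z_S(C) := { w ∈ C : w|_S = 0 }. -/

import Mathlib

/-- `J` is constrained with respect to `C ⊆ F^D` if some vector which is nonzero somewhere
on `J` annihilates every codeword on `J`. -/
def Constrained (F D : Type) [Field F] (C : Set (D → F)) (J : Finset D) : Prop :=
  ∃ z : D → F, (∃ x ∈ J, z x ≠ 0) ∧ ∀ w ∈ C, ∑ x ∈ J, z x * w x = 0

lemma dual_sum_single {F : Type} [Field F] {ι : Type} [Fintype ι] [DecidableEq ι]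
    (f : Module.Dual F (ι → F)) (v : ι → F) :
    f v = ∑ i : ι, v i * f (Pi.single i 1) := by
  conv_lhs => rw [← Finset.univ_sum_single v]
  rw [map_sum]
  refine Finset.sum_congr rfl fun i _ => ?_
  have h : (Pi.single i (v i) : ι → F) = v i • (Pi.single i (1 : F) : ι → F) := by
    funext j
    simp only [Pi.smul_apply, Pi.single_apply, smul_eq_mul]
    split <;> simp
  rw [h, map_smul, smul_eq_mul]

/-- If `S` is unconstrained, then for each `x ∈ S` there is a codeword equal to the
indicator of `x` on `S`. -/
lemma exists_single_codeword (F D : Type) [Field F] [DecidableEq D] (C : Submodule F (D → F))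
    (S : Finset D) (hS : ¬ Constrained F D C S) (x : D) (hx : x ∈ S) :
    ∃ e ∈ C, e x = 1 ∧ ∀ y ∈ S, y ≠ x → e y = 0 := by
  classical
  set r : (D → F) →ₗ[F] ({y // y ∈ S} → F) :=
    LinearMap.funLeft F F (fun i => (i : D)) with hr
  set p : Submodule F ({y // y ∈ S} → F) := C.map r with hp
  have hptop : p = ⊤ := by
    by_contra hne
    obtain ⟨f, hf0, hfbot⟩ := Submodule.exists_dual_map_eq_bot_of_lt_top
      (lt_top_iff_ne_top.mpr hne) inferInstance
    apply hS
    refine ⟨fun d => if h : d ∈ S then f (Pi.single (⟨d, h⟩ : {y // y ∈ S}) 1) else 0, ?_, ?_⟩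
    · obtain ⟨v, hv⟩ : ∃ v, f v ≠ 0 := by
        by_contra h; push_neg at h; exact hf0 (LinearMap.ext h)
      rw [dual_sum_single] at hv
      obtain ⟨i, -, hi⟩ := Finset.exists_ne_zero_of_sum_ne_zero hv
      refine ⟨i, i.2, ?_⟩
      simp only [i.2, dif_pos]
      intro h
      rw [Subtype.eta] at h
      rw [h, mul_zero] at hi
      exact hi rfl
    · intro w hw
      have hrw : f (r w) = 0 := by
        have : r w ∈ p := ⟨w, hw, rfl⟩
        have := Submodule.mem_map_of_mem (f := f) this
        rw [hfbot] at this
        exact (Submodule.mem_bot F).mp this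
      rw [dual_sum_single] at hrw
      rw [← Finset.sum_coe_sort S]
      rw [← hrw]
      refine Finset.sum_congr rfl fun i _ => ?_
      simp only [i.2, dif_pos, Subtype.eta]
      rw [mul_comm]
      rfl
  have : Pi.single (⟨x, hx⟩ : {y // y ∈ S}) (1 : F) ∈ p := hptop ▸ Submodule.mem_top
  obtain ⟨e, he, hre⟩ := this
  refine ⟨e, he, ?_, ?_⟩
  · have := congrFun hre ⟨x, hx⟩
    simpa [hr, LinearMap.funLeft] using this
  · intro y hy hyx
    have := congrFun hre ⟨y, hy⟩
    rw [Pi.single_apply, if_neg (by simpa using hyx)] at this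
    simpa [hr, LinearMap.funLeft] using this

/-- If `S` is unconstrained with respect to a linear code `C`, then `I ∪ S` is constrained
with respect to `C` iff `I \ S` is constrained with respect to the subcode of codewords
vanishing on `S`. -/
theorem stmt6 (F D : Type) [Field F] [DecidableEq D] (C : Submodule F (D → F))
    (I S : Finset D) (hS : ¬ Constrained F D C S) :
    Constrained F D C (I ∪ S) ↔
      Constrained F D {w : D → F | w ∈ C ∧ ∀ x ∈ S, w x = 0} (I \ S) := by
  classical
  have hsplit : ∀ (z w : D → F), ∑ x ∈ I ∪ S, z x * w x
      = ∑ x ∈ I \ S, z x * w x + ∑ x ∈ S, z x * w x := by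
    intro z w
    rw [← Finset.sdiff_union_self_eq_union, Finset.sum_union (Finset.sdiff_disjoint)]
  constructor
  · rintro ⟨z, hz, hzC⟩
    refine ⟨z, ?_, ?_⟩
    · by_contra h
      push_neg at h
      apply hS
      refine ⟨z, ?_, ?_⟩
      · obtain ⟨x, hx, hxne⟩ := hz
        refine ⟨x, ?_, hxne⟩
        rcases Finset.mem_union.mp hx with hxi | hxs
        · by_contra hxS
          exact hxne (h x (Finset.mem_sdiff.mpr ⟨hxi, hxS⟩))
        · exact hxs
      · intro w hw
        have := hzC w hw
        rw [hsplit] at this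
        have h0 : ∑ x ∈ I \ S, z x * w x = 0 :=
          Finset.sum_eq_zero fun x hx => by rw [h x hx, zero_mul]
        rw [h0, zero_add] at this
        exact this
    · rintro w ⟨hwC, hwS⟩
      have := hzC w hwC
      rw [hsplit] at this
      have h0 : ∑ x ∈ S, z x * w x = 0 :=
        Finset.sum_eq_zero fun x hx => by rw [hwS x hx, mul_zero]
      rw [h0, add_zero] at this
      exact this
  · rintro ⟨z, ⟨x0, hx0, hx0ne⟩, hzZ⟩
    choose e he he1 he0 using fun (x : {y // y ∈ S}) =>
      exists_single_codeword F D C S hS x.1 x.2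
    set c : D → F := fun d => if h : d ∈ S then ∑ y ∈ I \ S, z y * e ⟨d, h⟩ y else 0 with hc
    refine ⟨fun d => if d ∈ I \ S then z d else -c d, ?_, ?_⟩
    · exact ⟨x0, Finset.mem_union.mpr (Or.inl (Finset.mem_sdiff.mp hx0).1),
        by simpa [hx0] using hx0ne⟩
    · intro w hw
      rw [hsplit]
      have hdisj : ∀ x ∈ S, x ∉ I \ S := fun x hx h => (Finset.mem_sdiff.mp h).2 hx
      have hsum2 : ∑ x ∈ S, (if x ∈ I \ S then z x else -c x) * w x
          = -∑ x ∈ S, c x * w x := by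
        rw [← Finset.sum_neg_distrib]
        refine Finset.sum_congr rfl fun x hx => by rw [if_neg (hdisj x hx), neg_mul]
      have hsum1 : ∑ x ∈ I \ S, (if x ∈ I \ S then z x else -c x) * w x
          = ∑ x ∈ I \ S, z x * w x :=
        Finset.sum_congr rfl fun x hx => by rw [if_pos hx]
      rw [hsum1, hsum2]
      -- key claim: ∑_{I\S} z w = ∑_{x∈S} c x * w x
      set w' : D → F := w - ∑ x : {y // y ∈ S}, w x • e x with hw'
      have hw'C : w' ∈ C := by
        apply Submodule.sub_mem _ hw
        exact Submodule.sum_mem _ fun x _ => Submodule.smul_mem _ _ (he x)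
      have hw'S : ∀ y ∈ S, w' y = 0 := by
        intro y hy
        simp only [hw', Pi.sub_apply, Finset.sum_apply, Pi.smul_apply, smul_eq_mul]
        rw [sub_eq_zero, eq_comm, Finset.sum_eq_single (⟨y, hy⟩ : {s // s ∈ S})]
        · simp [he1]
        · intro b _ hb
          have hb0 : e b y = 0 := he0 b y hy (fun h => hb (by ext; exact h.symm))
          simp [hb0]
        · simp
      have hkey := hzZ w' ⟨hw'C, hw'S⟩
      have hexp : ∑ y ∈ I \ S, z y * w' y
          = ∑ y ∈ I \ S, z y * w y - ∑ x ∈ S, c x * w x := by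
        have h1 : ∀ y, z y * w' y
            = z y * w y - ∑ x : {s // s ∈ S}, z y * (w x * e x y) := by
          intro y
          simp only [hw', Pi.sub_apply, Finset.sum_apply, Pi.smul_apply, smul_eq_mul]
          rw [mul_sub, Finset.mul_sum]
        simp only [h1]
        rw [Finset.sum_sub_distrib]
        congr 1
        rw [Finset.sum_comm, ← Finset.sum_coe_sort S]
        refine Finset.sum_congr rfl fun x _ => ?_
        simp only [hc, x.2, dif_pos, Subtype.eta]
        rw [Finset.sum_mul]
        exact Finset.sum_congr rfl fun y _ => by ring
      rw [hkey] at hexp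
      linear_combination -hexp
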